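/- Let (Vᵏ)_{k≥0} be a nonnegative real sequence, ψ ∈ (0,1), ψ⁰ = 1, and γ₁, γ₂ ≥ 0. If V^{k+1} ≤ (1 − ψᵏ/2)⁻¹(Vᵏ + γ₁ψᵏ + γ₂ψ^{2k}) for all k ≥ 0, then the sequence (Vᵏ) is bounded: for all k, Vᵏ ≤ (∏_{j=0}^∞ (1 − ψʲ/2)⁻¹)·(V⁰ + γ₁/(1−ψ) + γ₂/(1−ψ²)). -/

import Mathlib

/-- Recursive Lyapunov bound: if `V^{k+1} ≤ (1 - ψᵏ/2)⁻¹ (Vᵏ + γ₁ψᵏ + γ₂ψ^{2k})` for all `k`,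
then `(Vᵏ)` is bounded by `(∏ⱼ (1 - ψʲ/2)⁻¹)(V⁰ + γ₁/(1-ψ) + γ₂/(1-ψ²))`. -/
theorem lyapunov_bounded (V : ℕ → ℝ) (ψ γ₁ γ₂ : ℝ)
    (hψ : ψ ∈ Set.Ioo (0 : ℝ) 1) (hγ₁ : 0 ≤ γ₁) (hγ₂ : 0 ≤ γ₂)
    (hV : ∀ k, 0 ≤ V k)
    (hrec : ∀ k, V (k + 1) ≤ (1 - ψ ^ k / 2)⁻¹ * (V k + γ₁ * ψ ^ k + γ₂ * ψ ^ (2 * k))) :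
    ∀ k, V k ≤ (∏' j : ℕ, (1 - ψ ^ j / 2)⁻¹) *
      (V 0 + γ₁ / (1 - ψ) + γ₂ / (1 - ψ ^ 2)) := by
  obtain ⟨hψ0, hψ1⟩ := hψ
  set a : ℕ → ℝ := fun j => (1 - ψ ^ j / 2)⁻¹ with ha
  have hpow_pos : ∀ j : ℕ, 0 < ψ ^ j := fun j => pow_pos hψ0 j
  have hpow_le : ∀ j : ℕ, ψ ^ j ≤ 1 := fun j => pow_le_one₀ hψ0.le hψ1.le
  have hden_pos : ∀ j : ℕ, (0:ℝ) < 1 - ψ ^ j / 2 := by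
    intro j
    have := hpow_le j
    linarith
  have ha_pos : ∀ j, 0 < a j := fun j => inv_pos.mpr (hden_pos j)
  have ha_one : ∀ j, 1 ≤ a j := by
    intro j
    rw [ha]
    rw [one_le_inv_iff₀]
    exact ⟨hden_pos j, by have := (hpow_pos j); linarith⟩
  -- Multipliability of a
  have hlog_le : ∀ j, Real.log (a j) ≤ ψ ^ j := by
    intro j
    have h1 : Real.log (a j) ≤ a j - 1 := Real.log_le_sub_one_of_pos (ha_pos j)
    have h2 : a j - 1 ≤ ψ ^ j := by
      have hd := hden_pos j
      have : a j ≤ 1 + ψ ^ j := by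
        rw [ha, inv_le_iff_one_le_mul₀ hd]
        have := hpow_le j
        have := hpow_pos j
        nlinarith
      linarith
    linarith
  have hlog_sum : Summable fun j => Real.log (a j) :=
    Summable.of_nonneg_of_le (fun j => Real.log_nonneg (ha_one j)) hlog_le
      (summable_geometric_of_lt_one hψ0.le hψ1)
  have hQeq : (∏' j : ℕ, a j) = Real.exp (∑' j, Real.log (a j)) := by
    have := Real.rexp_tsum_eq_tprod (f := a)
      (fun j => ha_pos j) hlog_sum
    exact this.symm
  have htsum_nn : 0 ≤ ∑' j, Real.log (a j) :=
    tsum_nonneg (fun j => Real.log_nonneg (ha_one j))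
  have hQ1 : (1:ℝ) ≤ ∏' j : ℕ, a j := by
    rw [hQeq]
    calc (1:ℝ) = Real.exp 0 := Real.exp_zero.symm
      _ ≤ _ := Real.exp_le_exp.mpr htsum_nn
  -- partial products
  set P : ℕ → ℝ := fun k => ∏ j ∈ Finset.range k, a j with hP
  have hPeq : ∀ k, P k = Real.exp (∑ j ∈ Finset.range k, Real.log (a j)) := by
    intro k
    rw [Real.exp_sum]
    exact (Finset.prod_congr rfl (fun j _ => (Real.exp_log (ha_pos j)).symm))
  have hPle : ∀ k, P k ≤ ∏' j : ℕ, a j := by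
    intro k
    rw [hPeq, hQeq]
    exact Real.exp_le_exp.mpr (Summable.sum_le_tsum (Finset.range k)
      (fun j _ => Real.log_nonneg (ha_one j)) hlog_sum)
  have hP1 : ∀ k, 1 ≤ P k := by
    intro k
    rw [hPeq]
    calc (1:ℝ) = Real.exp 0 := Real.exp_zero.symm
      _ ≤ _ := Real.exp_le_exp.mpr
        (Finset.sum_nonneg (fun j _ => Real.log_nonneg (ha_one j)))
  -- partial sums
  set S : ℕ → ℝ := fun k => ∑ j ∈ Finset.range k, ψ ^ j with hS
  set T : ℕ → ℝ := fun k => ∑ j ∈ Finset.range k, ψ ^ (2 * j) with hT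
  have hSle : ∀ k, S k ≤ 1 / (1 - ψ) := by
    intro k
    have := Summable.sum_le_tsum (Finset.range k) (fun j _ => (hpow_pos j).le)
      (summable_geometric_of_lt_one hψ0.le hψ1)
    rwa [tsum_geometric_of_lt_one hψ0.le hψ1, inv_eq_one_div] at this
  have hψ2 : ψ ^ 2 < 1 := by nlinarith
  have hTle : ∀ k, T k ≤ 1 / (1 - ψ ^ 2) := by
    intro k
    have hsum2 : Summable fun j : ℕ => (ψ ^ 2) ^ j :=
      summable_geometric_of_lt_one (by positivity) hψ2
    have := Summable.sum_le_tsum (Finset.range k)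
      (fun j _ => (pow_pos (by positivity : (0:ℝ) < ψ ^ 2) j).le) hsum2
    rw [tsum_geometric_of_lt_one (by positivity) hψ2, inv_eq_one_div] at this
    calc T k = ∑ j ∈ Finset.range k, (ψ ^ 2) ^ j := by
          simp [hT, ← pow_mul, mul_comm]
      _ ≤ 1 / (1 - ψ ^ 2) := this
  have hSnn : ∀ k, 0 ≤ S k := fun k =>
    Finset.sum_nonneg (fun j _ => (hpow_pos j).le)
  have hTnn : ∀ k, 0 ≤ T k := fun k =>
    Finset.sum_nonneg (fun j _ => (hpow_pos (2 * j)).le)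
  -- induction
  have key : ∀ k, V k ≤ P k * (V 0 + γ₁ * S k + γ₂ * T k) := by
    intro k
    induction k with
    | zero => simp [hP, hS, hT]
    | succ k ih =>
      have hPk := hP1 k
      have hak := ha_one k
      have brknn : 0 ≤ V 0 + γ₁ * S k + γ₂ * T k := by
        have := hV 0; have := hSnn k; have := hTnn k; positivity
      calc V (k + 1) ≤ a k * (V k + γ₁ * ψ ^ k + γ₂ * ψ ^ (2 * k)) := hrec k
        _ ≤ a k * (P k * (V 0 + γ₁ * S k + γ₂ * T k)
              + γ₁ * ψ ^ k + γ₂ * ψ ^ (2 * k)) := by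
          apply mul_le_mul_of_nonneg_left _ (ha_pos k).le
          linarith
        _ ≤ a k * (P k * (V 0 + γ₁ * S k + γ₂ * T k)
              + P k * (γ₁ * ψ ^ k + γ₂ * ψ ^ (2 * k))) := by
          apply mul_le_mul_of_nonneg_left _ (ha_pos k).le
          have h0 : 0 ≤ γ₁ * ψ ^ k + γ₂ * ψ ^ (2 * k) := by
            have := hpow_pos k; have := hpow_pos (2 * k); positivity
          nlinarith
        _ = P (k + 1) * (V 0 + γ₁ * S (k + 1) + γ₂ * T (k + 1)) := by
          simp only [hP, hS, hT, Finset.prod_range_succ, Finset.sum_range_succ]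
          ring
  intro k
  have brk_le : V 0 + γ₁ * S k + γ₂ * T k
      ≤ V 0 + γ₁ / (1 - ψ) + γ₂ / (1 - ψ ^ 2) := by
    have h1 := mul_le_mul_of_nonneg_left (hSle k) hγ₁
    have h2 := mul_le_mul_of_nonneg_left (hTle k) hγ₂
    rw [mul_one_div] at h1 h2
    linarith
  have brknn : 0 ≤ V 0 + γ₁ * S k + γ₂ * T k := by
    have := hV 0; have := hSnn k; have := hTnn k; positivity
  calc V k ≤ P k * (V 0 + γ₁ * S k + γ₂ * T k) := key k
    _ ≤ (∏' j : ℕ, a j) * (V 0 + γ₁ / (1 - ψ) + γ₂ / (1 - ψ ^ 2)) :=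
      mul_le_mul (hPle k) brk_le brknn (le_trans zero_le_one hQ1)
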